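/- For the replicator dynamics on the interior of the simplex and a dissipative Φ with equilibrium x*, the relative entropy H(x) = Σ_{p ∈ supp(x*)} x*_p ln(x*_p / x_p) satisfies ⟨∇H(x), B(x)⟩ = ⟨x − x*, Φ(x)⟩ ≤ 0 for all x with supp(x*) ⊆ supp(x), where B_p(x) = x_p(Φ_p(x) − ⟨x, Φ(x)⟩). -/

import Mathlib

theorem stmt_18 {S : Type*} [Fintype S]
    (Φ : (S → ℝ) → S → ℝ)
    (hdiss : ∀ x y : S → ℝ,
      ((∀ p, 0 ≤ x p) ∧ ∑ p, x p = 1) → ((∀ p, 0 ≤ y p) ∧ ∑ p, y p = 1) →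
      ∑ p, (Φ x p - Φ y p) * (x p - y p) ≤ 0)
    (xstar : S → ℝ) (hxstar : (∀ p, 0 ≤ xstar p) ∧ ∑ p, xstar p = 1)
    (heq : ∀ y : S → ℝ, ((∀ p, 0 ≤ y p) ∧ ∑ p, y p = 1) →
      0 ≤ ∑ p, Φ xstar p * (xstar p - y p))
    (H : (S → ℝ) → ℝ)
    (hH : ∀ z : S → ℝ,
      H z = ∑ p ∈ Finset.univ.filter (fun p => xstar p ≠ 0),
        xstar p * Real.log (xstar p / z p))
    (x : S → ℝ) (hx : (∀ p, 0 ≤ x p) ∧ ∑ p, x p = 1)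
    (hsupp : ∀ p, xstar p ≠ 0 → x p ≠ 0)
    (B : S → ℝ)
    (hB : ∀ p, B p = x p * (Φ x p - ∑ q, x q * Φ x q)) :
    fderiv ℝ H x B = ∑ p, (x p - xstar p) * Φ x p ∧
      ∑ p, (x p - xstar p) * Φ x p ≤ 0 := by
  set s := Finset.univ.filter (fun p => xstar p ≠ 0) with hs
  have hHfun : H = fun z => ∑ p ∈ s, xstar p * Real.log (xstar p / z p) := funext hH
  have hderiv : HasFDerivAt H
      (∑ p ∈ s, (xstar p * -(x p)⁻¹) •
        (ContinuousLinearMap.proj (R := ℝ) (φ := fun _ : S => ℝ) p)) x := by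
    rw [hHfun]
    apply HasFDerivAt.fun_sum
    intro p hp
    have hc : xstar p ≠ 0 := (Finset.mem_filter.mp hp).2
    have hxp : x p ≠ 0 := hsupp p hc
    have h1 : HasDerivAt (fun t : ℝ => xstar p * Real.log (xstar p / t))
        (xstar p * -(x p)⁻¹) (x p) := by
      have h2 : HasDerivAt (fun t : ℝ => xstar p / t) (-(xstar p / (x p) ^ 2)) (x p) := by
        simpa [div_eq_mul_inv, mul_comm, neg_mul, mul_neg] using
          (hasDerivAt_inv hxp).const_mul (xstar p)
      have h3 := h2.log (div_ne_zero hc hxp)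
      have h4 := h3.const_mul (xstar p)
      refine h4.congr_deriv ?_
      field_simp
    exact h1.comp_hasFDerivAt (f := fun z : S → ℝ => z p) x
      (ContinuousLinearMap.proj (R := ℝ) (φ := fun _ : S => ℝ) p).hasFDerivAt
  have happ : fderiv ℝ H x B = ∑ p ∈ s, (xstar p * -(x p)⁻¹) * B p := by
    rw [hderiv.fderiv]
    simp [ContinuousLinearMap.sum_apply]
  have hsum : ∑ p ∈ s, (xstar p * -(x p)⁻¹) * B p = ∑ p, (x p - xstar p) * Φ x p := by
    set A := ∑ q, x q * Φ x q with hA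
    have h1 : ∀ p ∈ s, (xstar p * -(x p)⁻¹) * B p = xstar p * A - xstar p * Φ x p := by
      intro p hp
      have hc : xstar p ≠ 0 := (Finset.mem_filter.mp hp).2
      have hxp : x p ≠ 0 := hsupp p hc
      rw [hB p]
      field_simp
      ring
    rw [Finset.sum_congr rfl h1]
    have h2 : ∀ p, xstar p * A - xstar p * Φ x p =
        (fun p => xstar p * A - xstar p * Φ x p) p := fun _ => rfl
    have hext : ∑ p ∈ s, (xstar p * A - xstar p * Φ x p)
        = ∑ p, (xstar p * A - xstar p * Φ x p) := by
      apply Finset.sum_subset (Finset.subset_univ _)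
      intro p _ hps
      have : xstar p = 0 := by
        by_contra h
        exact hps (Finset.mem_filter.mpr ⟨Finset.mem_univ p, h⟩)
      simp [this]
    rw [hext, Finset.sum_sub_distrib, ← Finset.sum_mul, hxstar.2, one_mul, hA,
      ← Finset.sum_sub_distrib]
    apply Finset.sum_congr rfl
    intro p _
    ring
  have hineq : ∑ p, (x p - xstar p) * Φ x p ≤ 0 := by
    have hd := hdiss x xstar hx hxstar
    have he := heq x hx
    have hsplit : ∑ p, (Φ x p - Φ xstar p) * (x p - xstar p)
        = ∑ p, (x p - xstar p) * Φ x p + ∑ p, Φ xstar p * (xstar p - x p) := by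
      rw [← Finset.sum_add_distrib]
      apply Finset.sum_congr rfl
      intro p _
      ring
    linarith [hsplit ▸ hd]
  exact ⟨happ.trans hsum, hineq⟩
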